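/- For each n ≥ 0 and k ≥ 2, the list F(n,k) defined by F(n,k) = C(n) for 0 ≤ n < k, and F(n,k) = 1·reverse(F(n-1,k)) ∘ 01·reverse(F(n-2,k)) ∘ ... ∘ 0^(k-1)1·reverse(F(n-k,k)) for n ≥ k, is a Gray code: consecutive strings in the list differ in exactly one position. -/

import Mathlib

/-- Hamming distance between two (equal-length) strings. -/
def hamming {α : Type*} [DecidableEq α] (u v : List α) : ℕ :=
  (List.zip u v).countP (fun p => decide (p.1 ≠ p.2))

/-- The binary reflected Gray code `C(n)` (strings over `{0,1} ⊆ ℕ`):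
`C(0) = (λ)`, `C(n) = 1·reverse(C(n-1)) ∘ 0·C(n-1)`. -/
def C : ℕ → List (List ℕ)
  | 0 => [[]]
  | n+1 => (C n).reverse.map (fun w => 1 :: w) ++ (C n).map (fun w => 0 :: w)

/-- The Gray code list `F(n,k)` of binary strings avoiding `k` consecutive `0`'s:
`F(n,k) = C(n)` for `n < k`, and for `n ≥ k`,
`F(n,k) = 1·reverse(F(n-1,k)) ∘ 01·reverse(F(n-2,k)) ∘ ⋯ ∘ 0^(k-1)1·reverse(F(n-k,k))`. -/
def F (k : ℕ) : ℕ → List (List ℕ)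
  | n =>
    if h : n < k ∨ k = 0 then C n
    else ((List.range k).map (fun j =>
      (F k (n - (j+1))).reverse.map (fun w => List.replicate j 0 ++ 1 :: w))).flatten
termination_by n => n
decreasing_by push_neg at h; omega

lemma hamming_self {α : Type*} [DecidableEq α] (u : List α) : hamming u u = 0 := by
  induction u with
  | nil => rfl
  | cons a u ih => simpa [hamming] using ih

lemma hamming_cons_same {α : Type*} [DecidableEq α] (a : α) (u v : List α) :
    hamming (a :: u) (a :: v) = hamming u v := by
  simp [hamming]

lemma hamming_append_left {α : Type*} [DecidableEq α] (p u v : List α) :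
    hamming (p ++ u) (p ++ v) = hamming u v := by
  induction p with
  | nil => rfl
  | cons a p ih => simpa [hamming_cons_same] using ih

lemma hamming_comm {α : Type*} [DecidableEq α] (u v : List α) :
    hamming u v = hamming v u := by
  unfold hamming
  rw [← List.zip_swap v u, List.countP_map]
  congr 1
  funext p
  simp [Function.comp, ne_comm]

lemma hamming_cons_ne {α : Type*} [DecidableEq α] {a b : α} (h : a ≠ b) (u : List α) :
    hamming (a :: u) (b :: u) = 1 := by
  have h0 : (u.zip u).countP (fun p => decide (p.1 ≠ p.2)) = 0 := hamming_self u
  unfold hamming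
  rw [List.zip_cons_cons, List.countP_cons, h0]
  simp [h]

lemma C_ne (n : ℕ) : C n ≠ [] := by
  induction n with
  | zero => simp [C]
  | succ n ih => simp [C, ih]

lemma F_ne (k n : ℕ) : F k n ≠ [] := by
  induction n using Nat.strong_induction_on with
  | _ n ih =>
    rw [F]
    split
    · exact C_ne n
    · rename_i h
      push_neg at h
      simp only [ne_eq, List.flatten_eq_nil_iff]
      push_neg
      refine ⟨(F k (n - 1)).reverse.map (fun w => List.replicate 0 0 ++ 1 :: w), ?_, ?_⟩
      · exact List.mem_map_of_mem (by simpa using Nat.pos_of_ne_zero h.2)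
      · simp [ih (n-1) (by omega)]

lemma head_F (k n : ℕ) (hn : 1 ≤ n) :
    (F k n).head? = ((F k (n - 1)).getLast?).map (fun w => 1 :: w) := by
  obtain ⟨m, rfl⟩ : ∃ m, n = m + 1 := ⟨n - 1, by omega⟩
  rw [F]
  split
  · rename_i h
    have : F k m = C m := by rw [F]; rw [dif_pos (by omega)]
    simp only [C, Nat.add_sub_cancel, this]
    rw [List.head?_append_of_ne_nil _ (by simp [C_ne m])]
    simp [List.head?_reverse]
  · rename_i h
    push_neg at h
    obtain ⟨j, rfl⟩ : ∃ j, k = j + 1 := ⟨k - 1, by omega⟩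
    rw [List.range_succ_eq_map, List.map_cons, List.flatten_cons]
    rw [List.head?_append_of_ne_nil _ (by simp [F_ne])]
    simp [List.head?_reverse]

lemma chain_rev {l : List (List ℕ)} (h : List.Chain' (fun u v => hamming u v = 1) l) :
    List.Chain' (fun u v => hamming u v = 1) l.reverse :=
  List.isChain_reverse.mpr ((show List.IsChain _ l from h).imp fun a b hab => by show hamming b a = 1; rw [hamming_comm]; exact hab)

lemma chain_map {f : List ℕ → List ℕ} (hf : ∀ u v, hamming (f u) (f v) = hamming u v)
    {l : List (List ℕ)} (h : List.Chain' (fun u v => hamming u v = 1) l) :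
    List.Chain' (fun u v => hamming u v = 1) (l.map f) :=
  (List.isChain_map f).2 ((show List.IsChain _ l from h).imp fun a b hab => by rw [hf]; exact hab)

lemma chainC (n : ℕ) : List.Chain' (fun u v => hamming u v = 1) (C n) := by
  induction n with
  | zero => simp [C, List.Chain']
  | succ n ih =>
    rw [C]
    apply List.IsChain.append
    · exact chain_map (fun u v => hamming_cons_same 1 u v) (chain_rev ih)
    · exact chain_map (fun u v => hamming_cons_same 0 u v) ih
    · intro x hx y hy
      rw [List.getLast?_map, List.getLast?_reverse] at hx
      rw [List.head?_map] at hy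
      cases hc : (C n).head? with
      | none => simp [hc] at hx
      | some w =>
        rw [hc] at hx hy
        simp only [Option.map_some, Option.mem_def, Option.some.injEq] at hx hy
        subst hx; subst hy
        exact hamming_cons_ne one_ne_zero w

/-- `F(n,k)` is a Gray code: consecutive strings differ in exactly one position. -/
theorem stmt12 (k n : ℕ) (hk : 2 ≤ k) :
    List.Chain' (fun u v => hamming u v = 1) (F k n) := by
  induction n using Nat.strong_induction_on with
  | _ n ih =>
  rw [F]
  split
  · exact chainC n
  · rename_i h
    push_neg at h
    unfold List.Chain'
    rw [List.isChain_flatten (by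
      intro hmem
      simp only [List.mem_map] at hmem
      obtain ⟨j, hj, hj2⟩ := hmem
      exact F_ne k _ (by simpa using hj2))]
    refine ⟨?_, ?_⟩
    · intro l hl
      simp only [List.mem_map, List.mem_range] at hl
      obtain ⟨j, hj, rfl⟩ := hl
      exact chain_map (fun u v => by rw [hamming_append_left, hamming_cons_same])
        (chain_rev (ih _ (by omega)))
    · rw [List.isChain_map]
      obtain ⟨K, rfl⟩ : ∃ K, k = K + 1 := ⟨k - 1, by omega⟩
      refine (List.isChain_range_succ _ K).mpr ?_
      intro j hj
      intro x hx y hy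
      rw [List.getLast?_map, List.getLast?_reverse] at hx
      rw [List.head?_map, List.head?_reverse] at hy
      have h1 : n - (j + 1) = (n - (j + 2)) + 1 := by omega
      rw [h1, head_F _ _ (by omega), Nat.add_sub_cancel] at hx
      have h2 : n - (j + 1 + 1) = n - (j + 2) := by omega
      rw [h2] at hy
      cases hw : (F (K + 1) (n - (j + 2))).getLast? with
      | none => exact absurd (List.getLast?_eq_none_iff.mp hw) (F_ne _ _)
      | some w =>
        rw [hw] at hx hy
        simp only [Option.map_some, Option.mem_def, Option.some.injEq] at hx hy
        subst hx; subst hy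
        have hy' : List.replicate (j + 1) (0 : ℕ) ++ 1 :: w
            = List.replicate j 0 ++ 0 :: 1 :: w := by
          rw [List.replicate_succ']; simp
        rw [hy', hamming_append_left, hamming_cons_ne one_ne_zero]
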